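/- Let 0 < R_1 < R_2 < R_3 and α = ln(R_3/R_2)/ln(R_3/R_1). Then for every integer n ≥ 1 and nonnegative reals A, B: n R_2^{2n} A² + n R_2^{−2n} B² ≤ (n R_1^{2n} A² + n R_1^{−2n} B²)^α (n R_3^{2n} A² + n R_3^{−2n} B²)^{1−α}. Consequently, summing over n and applying Hölder's inequality, if S(r) = Σ_n (n r^{2n} |a_n|² + n r^{−2n} |b_n|²) for sequences (a_n), (b_n), then S(R_2) ≤ S(R_1)^α S(R_3)^{1−α}. -/

import Mathlib

open Finset in
lemma two_holder {α : ℝ} (hα0 : 0 < α) (hα1 : α < 1) {x₁ x₂ y₁ y₂ : ℝ}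
    (hx₁ : 0 ≤ x₁) (hx₂ : 0 ≤ x₂) (hy₁ : 0 ≤ y₁) (hy₂ : 0 ≤ y₂) :
    x₁ ^ α * y₁ ^ (1 - α) + x₂ ^ α * y₂ ^ (1 - α) ≤ (x₁ + x₂) ^ α * (y₁ + y₂) ^ (1 - α) := by
  have h1α : 0 < 1 - α := by linarith
  have hpq : Real.HolderConjugate (1 / α) (1 / (1 - α)) :=
    Real.holderConjugate_iff.mpr ⟨(one_lt_div hα0).mpr hα1, by
      rw [one_div, one_div, inv_inv, inv_inv]; ring⟩
  have key := Real.inner_le_Lp_mul_Lq_of_nonneg (univ : Finset (Fin 2)) hpq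
    (f := ![x₁ ^ α, x₂ ^ α]) (g := ![y₁ ^ (1 - α), y₂ ^ (1 - α)])
    (by intro i _; fin_cases i <;> simp <;> positivity)
    (by intro i _; fin_cases i <;> simp <;> positivity)
  simp only [Fin.sum_univ_two, Matrix.cons_val_zero, Matrix.cons_val_one, Matrix.head_cons] at key
  have e1 : (x₁ ^ α) ^ (1 / α) = x₁ := by
    rw [← Real.rpow_mul hx₁, mul_one_div_cancel hα0.ne', Real.rpow_one]
  have e2 : (x₂ ^ α) ^ (1 / α) = x₂ := by
    rw [← Real.rpow_mul hx₂, mul_one_div_cancel hα0.ne', Real.rpow_one]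
  have e3 : (y₁ ^ (1 - α)) ^ (1 / (1 - α)) = y₁ := by
    rw [← Real.rpow_mul hy₁, mul_one_div_cancel h1α.ne', Real.rpow_one]
  have e4 : (y₂ ^ (1 - α)) ^ (1 / (1 - α)) = y₂ := by
    rw [← Real.rpow_mul hy₂, mul_one_div_cancel h1α.ne', Real.rpow_one]
  rw [e1, e2, e3, e4, one_div_one_div, one_div_one_div] at key
  exact key

/-- the interpolation inequality at the heart of the three-sphere inequality:
termwise `n R₂^{2n} A² + n R₂^{-2n} B² ≤ (·at R₁)^α (·at R₃)^{1-α}` with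
`α = ln(R₃/R₂)/ln(R₃/R₁)`, and hence, summing and using Hölder,
`S(R₂) ≤ S(R₁)^α S(R₃)^{1-α}` for `S(r) = Σ_n (n r^{2n}|aₙ|² + n r^{-2n}|bₙ|²)`. -/
theorem three_sphere_interpolation (R₁ R₂ R₃ : ℝ) (h0 : 0 < R₁) (h12 : R₁ < R₂)
    (h23 : R₂ < R₃) :
    (∀ n : ℕ, 1 ≤ n → ∀ A B : ℝ, 0 ≤ A → 0 ≤ B →
      (n : ℝ) * R₂ ^ (2 * n) * A ^ 2 + (n : ℝ) * R₂ ^ (-(2 * n : ℤ)) * B ^ 2 ≤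
        ((n : ℝ) * R₁ ^ (2 * n) * A ^ 2 + (n : ℝ) * R₁ ^ (-(2 * n : ℤ)) * B ^ 2)
            ^ (Real.log (R₃ / R₂) / Real.log (R₃ / R₁)) *
        ((n : ℝ) * R₃ ^ (2 * n) * A ^ 2 + (n : ℝ) * R₃ ^ (-(2 * n : ℤ)) * B ^ 2)
            ^ (1 - Real.log (R₃ / R₂) / Real.log (R₃ / R₁))) ∧
    (∀ a b : ℕ → ℝ,
      Summable (fun n : ℕ =>
        (n : ℝ) * R₁ ^ (2 * n) * |a n| ^ 2 + (n : ℝ) * R₁ ^ (-(2 * n : ℤ)) * |b n| ^ 2) →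
      Summable (fun n : ℕ =>
        (n : ℝ) * R₃ ^ (2 * n) * |a n| ^ 2 + (n : ℝ) * R₃ ^ (-(2 * n : ℤ)) * |b n| ^ 2) →
      (∑' n : ℕ,
        ((n : ℝ) * R₂ ^ (2 * n) * |a n| ^ 2 + (n : ℝ) * R₂ ^ (-(2 * n : ℤ)) * |b n| ^ 2)) ≤
        (∑' n : ℕ,
          ((n : ℝ) * R₁ ^ (2 * n) * |a n| ^ 2 + (n : ℝ) * R₁ ^ (-(2 * n : ℤ)) * |b n| ^ 2))
            ^ (Real.log (R₃ / R₂) / Real.log (R₃ / R₁)) *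
        (∑' n : ℕ,
          ((n : ℝ) * R₃ ^ (2 * n) * |a n| ^ 2 + (n : ℝ) * R₃ ^ (-(2 * n : ℤ)) * |b n| ^ 2))
            ^ (1 - Real.log (R₃ / R₂) / Real.log (R₃ / R₁))) := by
  have hR2 : 0 < R₂ := h0.trans h12
  have hR3 : 0 < R₃ := hR2.trans h23
  set α := Real.log (R₃ / R₂) / Real.log (R₃ / R₁) with hαdef
  have l31 : 0 < Real.log (R₃ / R₁) := Real.log_pos ((one_lt_div h0).mpr (h12.trans h23))
  have l32 : 0 < Real.log (R₃ / R₂) := Real.log_pos ((one_lt_div hR2).mpr h23)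
  have hα0 : 0 < α := div_pos l32 l31
  have hα1 : α < 1 := (div_lt_one l31).mpr
    (Real.log_lt_log (div_pos hR3 hR2) (div_lt_div_of_pos_left hR3 h0 h12))
  have h1α : 0 < 1 - α := by linarith
  -- R₂ = R₁^α * R₃^(1-α)
  have hlog : Real.log R₁ * α + Real.log R₃ * (1 - α) = Real.log R₂ := by
    rw [hαdef, Real.log_div hR3.ne' h0.ne', Real.log_div hR3.ne' hR2.ne']
    have hne : Real.log R₃ - Real.log R₁ ≠ 0 := by
      rw [← Real.log_div hR3.ne' h0.ne']; exact l31.ne'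
    field_simp
    ring
  have hR2eq : R₂ = R₁ ^ α * R₃ ^ (1 - α) := by
    rw [Real.rpow_def_of_pos h0, Real.rpow_def_of_pos hR3, ← Real.exp_add, hlog,
      Real.exp_log hR2]
  -- zpow version
  have hz : ∀ m : ℤ, R₂ ^ m = (R₁ ^ m) ^ α * (R₃ ^ m) ^ (1 - α) := by
    intro m
    have aux : ∀ (x : ℝ), 0 < x → ∀ β : ℝ, (x ^ β) ^ m = (x ^ m) ^ β := by
      intro x hx β
      rw [← Real.rpow_intCast (x ^ β) m, ← Real.rpow_mul hx.le, mul_comm,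
        Real.rpow_mul hx.le, Real.rpow_intCast]
    rw [hR2eq, mul_zpow, aux R₁ h0, aux R₃ hR3]
  -- termwise rewriting: (c*x)^α*(c*y)^(1-α) = c * (x^α * y^(1-α)) for c ≥ 0, x,y > 0
  have interp : ∀ (c x y : ℝ), 0 ≤ c → 0 ≤ x → 0 ≤ y →
      (c * x) ^ α * (c * y) ^ (1 - α) = c * (x ^ α * y ^ (1 - α)) := by
    intro c x y hc hx hy
    rw [Real.mul_rpow hc hx, Real.mul_rpow hc hy]
    have : c ^ α * c ^ (1 - α) = c := by
      rw [← Real.rpow_add' hc (by norm_num), add_sub_cancel, Real.rpow_one]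
    calc c ^ α * x ^ α * (c ^ (1 - α) * y ^ (1 - α))
        = (c ^ α * c ^ (1 - α)) * (x ^ α * y ^ (1 - α)) := by ring
      _ = c * (x ^ α * y ^ (1 - α)) := by rw [this]
  -- the termwise inequality, valid for all n (not just n ≥ 1)
  have main : ∀ (n : ℕ) (A B : ℝ), 0 ≤ A → 0 ≤ B →
      (n : ℝ) * R₂ ^ (2 * n) * A ^ 2 + (n : ℝ) * R₂ ^ (-(2 * n : ℤ)) * B ^ 2 ≤
        ((n : ℝ) * R₁ ^ (2 * n) * A ^ 2 + (n : ℝ) * R₁ ^ (-(2 * n : ℤ)) * B ^ 2) ^ α *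
        ((n : ℝ) * R₃ ^ (2 * n) * A ^ 2 + (n : ℝ) * R₃ ^ (-(2 * n : ℤ)) * B ^ 2) ^ (1 - α) := by
    intro n A B hA hB
    have key := two_holder hα0 hα1
      (x₁ := (n : ℝ) * R₁ ^ (2 * n) * A ^ 2) (x₂ := (n : ℝ) * R₁ ^ (-(2 * n : ℤ)) * B ^ 2)
      (y₁ := (n : ℝ) * R₃ ^ (2 * n) * A ^ 2) (y₂ := (n : ℝ) * R₃ ^ (-(2 * n : ℤ)) * B ^ 2)
      (by have : (0:ℝ) ≤ R₁ ^ (2*n) := by positivity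
          positivity)
      (by have : (0:ℝ) ≤ R₁ ^ (-(2*n:ℤ)) := by positivity
          positivity)
      (by have : (0:ℝ) ≤ R₃ ^ (2*n) := by positivity
          positivity)
      (by have : (0:ℝ) ≤ R₃ ^ (-(2*n:ℤ)) := by positivity
          positivity)
    refine le_trans (le_of_eq ?_) key
    have e1 : ((n : ℝ) * R₁ ^ (2 * n) * A ^ 2) ^ α * ((n : ℝ) * R₃ ^ (2 * n) * A ^ 2) ^ (1 - α)
        = (n : ℝ) * R₂ ^ (2 * n) * A ^ 2 := by
      have h1 : (n : ℝ) * R₁ ^ (2 * n) * A ^ 2 = ((n : ℝ) * A ^ 2) * R₁ ^ ((2 * n : ℕ) : ℤ) := by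
        rw [zpow_natCast]; ring
      have h3 : (n : ℝ) * R₃ ^ (2 * n) * A ^ 2 = ((n : ℝ) * A ^ 2) * R₃ ^ ((2 * n : ℕ) : ℤ) := by
        rw [zpow_natCast]; ring
      rw [h1, h3, interp _ _ _ (by positivity) (by positivity) (by positivity), ← hz,
        zpow_natCast]
      ring
    have e2 : ((n : ℝ) * R₁ ^ (-(2 * n : ℤ)) * B ^ 2) ^ α *
          ((n : ℝ) * R₃ ^ (-(2 * n : ℤ)) * B ^ 2) ^ (1 - α)
        = (n : ℝ) * R₂ ^ (-(2 * n : ℤ)) * B ^ 2 := by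
      have h1 : (n : ℝ) * R₁ ^ (-(2 * n : ℤ)) * B ^ 2
          = ((n : ℝ) * B ^ 2) * R₁ ^ (-(2 * n : ℤ)) := by ring
      have h3 : (n : ℝ) * R₃ ^ (-(2 * n : ℤ)) * B ^ 2
          = ((n : ℝ) * B ^ 2) * R₃ ^ (-(2 * n : ℤ)) := by ring
      rw [h1, h3, interp _ _ _ (by positivity) (by positivity) (by positivity), ← hz]
      ring
    rw [e1, e2]
  constructor
  · intro n _ A B hA hB; exact main n A B hA hB
  · intro a b hS1 hS3
    set F₁ : ℕ → ℝ := fun n =>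
      (n : ℝ) * R₁ ^ (2 * n) * |a n| ^ 2 + (n : ℝ) * R₁ ^ (-(2 * n : ℤ)) * |b n| ^ 2 with hF₁
    set F₂ : ℕ → ℝ := fun n =>
      (n : ℝ) * R₂ ^ (2 * n) * |a n| ^ 2 + (n : ℝ) * R₂ ^ (-(2 * n : ℤ)) * |b n| ^ 2 with hF₂
    set F₃ : ℕ → ℝ := fun n =>
      (n : ℝ) * R₃ ^ (2 * n) * |a n| ^ 2 + (n : ℝ) * R₃ ^ (-(2 * n : ℤ)) * |b n| ^ 2 with hF₃
    have hF₁nn : ∀ n, 0 ≤ F₁ n := fun n => by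
      have : (0:ℝ) ≤ R₁ ^ (-(2*n:ℤ)) := by positivity
      positivity
    have hF₂nn : ∀ n, 0 ≤ F₂ n := fun n => by
      have : (0:ℝ) ≤ R₂ ^ (-(2*n:ℤ)) := by positivity
      positivity
    have hF₃nn : ∀ n, 0 ≤ F₃ n := fun n => by
      have : (0:ℝ) ≤ R₃ ^ (-(2*n:ℤ)) := by positivity
      positivity
    have hterm : ∀ n, F₂ n ≤ F₁ n ^ α * F₃ n ^ (1 - α) := fun n =>
      main n |a n| |b n| (abs_nonneg _) (abs_nonneg _)
    have hpq : Real.HolderConjugate (1 / α) (1 / (1 - α)) :=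
      Real.holderConjugate_iff.mpr ⟨(one_lt_div hα0).mpr hα1, by rw [one_div, one_div, inv_inv, inv_inv]; ring⟩
    have ef : (fun n => (F₁ n ^ α) ^ (1 / α)) = F₁ := funext fun n => by
      rw [← Real.rpow_mul (hF₁nn n), mul_one_div_cancel hα0.ne', Real.rpow_one]
    have eg : (fun n => (F₃ n ^ (1 - α)) ^ (1 / (1 - α))) = F₃ := funext fun n => by
      rw [← Real.rpow_mul (hF₃nn n), mul_one_div_cancel h1α.ne', Real.rpow_one]
    have holder := Real.summable_and_inner_le_Lp_mul_Lq_tsum_of_nonneg hpq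
      (f := fun n => F₁ n ^ α) (g := fun n => F₃ n ^ (1 - α))
      (fun n => Real.rpow_nonneg (hF₁nn n) _) (fun n => Real.rpow_nonneg (hF₃nn n) _)
      (by rw [ef]; exact hS1) (by rw [eg]; exact hS3)
    have hsum2 : Summable F₂ :=
      Summable.of_nonneg_of_le hF₂nn hterm holder.1
    calc ∑' n, F₂ n ≤ ∑' n, F₁ n ^ α * F₃ n ^ (1 - α) :=
          Summable.tsum_le_tsum hterm hsum2 holder.1
      _ ≤ (∑' n, (F₁ n ^ α) ^ (1 / α)) ^ (1 / (1 / α)) *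
            (∑' n, (F₃ n ^ (1 - α)) ^ (1 / (1 - α))) ^ (1 / (1 / (1 - α))) := holder.2
      _ = (∑' n, F₁ n) ^ α * (∑' n, F₃ n) ^ (1 - α) := by
          rw [ef, eg, one_div_one_div, one_div_one_div]
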